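/- Let a > 0 and b, x₀ ∈ ℝ with a x₀ ≠ b, and let u : ℝ → ℝ be continuous. Let x solve x′ = b − a x, x(0) = x₀, and let y solve y′ = b − a y + u(t), y(0) = x₀. Then lim_{t→+∞} (a y(t) − b)/(a x(t) − b) = 0 if and only if lim_{t→+∞} ∫₀ᵗ e^{as} u(s) ds = (b − a x₀)/a. -/

import Mathlib

open Filter

/-- Acceleration-of-convergence criterion.  With `x, y` as in the residual
ratio formula, `lim_{t→∞} (a y(t) − b)/(a x(t) − b) = 0` iff
`lim_{t→∞} ∫₀ᵗ e^{as} u(s) ds = (b − a x₀)/a`. -/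
theorem acceleration_criterion (a b x₀ : ℝ) (ha : 0 < a) (hx₀ : a * x₀ ≠ b)
    (u : ℝ → ℝ) (hu : Continuous u)
    (x : ℝ → ℝ) (hx : ∀ t : ℝ, HasDerivAt x (b - a * x t) t) (hx0 : x 0 = x₀)
    (y : ℝ → ℝ) (hy : ∀ t : ℝ, HasDerivAt y (b - a * y t + u t) t)
    (hy0 : y 0 = x₀) :
    Tendsto (fun t => (a * y t - b) / (a * x t - b)) atTop (nhds 0) ↔
      Tendsto (fun t => ∫ s in (0 : ℝ)..t, Real.exp (a * s) * u s) atTop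
        (nhds ((b - a * x₀) / a)) := by
  have ha' : a ≠ 0 := ha.ne'
  set c : ℝ := x₀ - b / a with hc_def
  have hc : c ≠ 0 := by
    intro h
    apply hx₀
    have h' : x₀ - b / a = 0 := h
    have : x₀ = b / a := by linarith
    rw [this]; field_simp
  have hexp : ∀ t : ℝ, HasDerivAt (fun t : ℝ => Real.exp (a * t))
      (a * Real.exp (a * t)) t := by
    intro t
    have h1 : HasDerivAt (fun t : ℝ => a * t) a t := by
      simpa using (hasDerivAt_id t).const_mul a
    exact ((Real.hasDerivAt_exp (a * t)).comp t h1).congr_deriv (mul_comm _ _)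
  -- explicit form of x
  have hX : ∀ t : ℝ, Real.exp (a * t) * (x t - b / a) = c := by
    have hderiv : ∀ t : ℝ,
        HasDerivAt (fun t => Real.exp (a * t) * (x t - b / a)) 0 t := by
      intro t
      have h2 : HasDerivAt (fun t => x t - b / a) (b - a * x t) t :=
        (hx t).sub_const _
      have := (hexp t).mul h2
      refine this.congr_deriv ?_
      linear_combination (-Real.exp (a * t)) * (mul_div_cancel₀ b ha')
    have hconst : ∀ s t : ℝ, Real.exp (a * s) * (x s - b / a)
        = Real.exp (a * t) * (x t - b / a) :=
      is_const_of_deriv_eq_zero (fun t => (hderiv t).differentiableAt)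
        (fun t => (hderiv t).deriv)
    intro t
    have := hconst t 0
    simpa [hx0, hc_def] using this
  -- F solves F' = exp(a t) u t
  set F : ℝ → ℝ := fun t => Real.exp (a * t) * (y t - b / a) with hF_def
  have hFderiv : ∀ t : ℝ, HasDerivAt F (Real.exp (a * t) * u t) t := by
    intro t
    have h2 : HasDerivAt (fun t => y t - b / a) (b - a * y t + u t) t :=
      (hy t).sub_const _
    have := (hexp t).mul h2
    refine this.congr_deriv ?_
    linear_combination (-Real.exp (a * t)) * (mul_div_cancel₀ b ha')
  have hF0 : F 0 = c := by simp [hF_def, hy0, hc_def]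
  have hInt : ∀ t : ℝ,
      (∫ s in (0 : ℝ)..t, Real.exp (a * s) * u s) = F t - c := by
    intro t
    have hcont : Continuous fun s => Real.exp (a * s) * u s :=
      (Real.continuous_exp.comp (continuous_const.mul continuous_id)).mul hu
    rw [intervalIntegral.integral_eq_sub_of_hasDerivAt
      (fun s _ => hFderiv s) (hcont.intervalIntegrable 0 t), hF0]
  -- ratio formula
  have key : ∀ t : ℝ, (a * y t - b) / (a * x t - b) = F t / c := by
    intro t
    have hE : Real.exp (a * t) ≠ 0 := Real.exp_ne_zero _
    have hx' : x t - b / a = c / Real.exp (a * t) := by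
      rw [eq_div_iff hE, mul_comm]; exact hX t
    have hy' : y t - b / a = F t / Real.exp (a * t) := by
      rw [eq_div_iff hE, mul_comm]
    have h1 : a * x t - b = a * (c / Real.exp (a * t)) := by
      rw [← hx']; field_simp
    have h2 : a * y t - b = a * (F t / Real.exp (a * t)) := by
      rw [← hy']; field_simp
    rw [h1, h2]
    field_simp
  have hlim : (b - a * x₀) / a = -c := by
    field_simp [hc_def]
    linear_combination a * hc_def - (mul_div_cancel₀ b ha')
  rw [hlim]
  constructor
  · intro h
    have h' : Tendsto (fun t => F t / c) atTop (nhds 0) := by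
      refine h.congr fun t => key t
    have h2 : Tendsto (fun t => F t / c * c - c) atTop (nhds (0 * c - c)) :=
      (h'.mul_const c).sub_const c
    refine Tendsto.congr (fun t => ?_) (by simpa using h2)
    rw [hInt t]
    field_simp
  · intro h
    have h2 : Tendsto (fun t => ((∫ s in (0:ℝ)..t, Real.exp (a*s) * u s) + c) / c)
        atTop (nhds ((-c + c) / c)) := (h.add_const c).div_const c
    have h3 : Tendsto (fun t => F t / c) atTop (nhds 0) := by
      have : (-c + c) / c = 0 := by simp
      rw [this] at h2
      refine h2.congr fun t => ?_
      rw [hInt t]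
      ring_nf
    exact h3.congr fun t => (key t).symm
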